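/- For smooth u on Ω and x ∈ Ω, the gradient of the smoothing operator admits the identity ∇u(x) − ∇(S_δ u)(x) = (1/w_δ(x))∫_Ω R_δ(x,y)(∇u(x) − ∇u(y)) dy + (1/w_δ(x)²)∫_{∂Ω}∫_Ω R_δ(x,y)R_δ(x,z)(u(z) − u(y)) n(z) dy dS_z, where n(z) is the outward unit normal. -/

import Mathlib

open MeasureTheory Set InnerProductSpace Convolution

section Aux

variable {n : ℕ}

local notation "E" => EuclideanSpace ℝ (Fin n)

theorem myGradCont {g : E → ℝ} (hg : ContDiff ℝ 1 g) : Continuous (gradient g) := by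
  have : Continuous fun z : E => (toDual ℝ E).symm (fderiv ℝ g z) :=
    (toDual ℝ E).symm.continuous.comp (hg.continuous_fderiv one_ne_zero)
  exact this

theorem myGradSupp {g : E → ℝ} (hgc : HasCompactSupport g) :
    HasCompactSupport (gradient g) :=
  (hgc.fderiv ℝ).comp_left (g := (toDual ℝ E).symm) (map_zero _)

theorem mySubSupp {V : Type*} [TopologicalSpace V] [Zero V]
    {f : E → V} (hf : HasCompactSupport f) (x : E) :
    HasCompactSupport fun y => f (x - y) := by
  obtain ⟨r, hr⟩ := hf.isBounded.subset_closedBall 0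
  refine HasCompactSupport.intro (isCompact_closedBall x r) fun y hy => ?_
  apply image_eq_zero_of_notMem_tsupport
  intro hmem
  apply hy
  have := hr hmem
  simp only [Metric.mem_closedBall, dist_zero_right] at this
  simp only [Metric.mem_closedBall]
  rw [dist_comm, dist_eq_norm]
  exact this

theorem myDualGrad {g : E → ℝ} (z w : E) :
    ⟪gradient g z, w⟫_ℝ = fderiv ℝ g z w := by
  rw [← InnerProductSpace.toDual_apply_apply]
  simp [gradient]

theorem myDualGrad' {g : E → ℝ} (z : E) :
    toDual ℝ E (gradient g z) = fderiv ℝ g z := by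
  simp [gradient]

theorem myGradCompSub {g : E → ℝ} (hg : ContDiff ℝ 1 g) (x y : E) :
    HasGradientAt (fun y' => g (x - y')) (-gradient g (x - y)) y := by
  rw [hasGradientAt_iff_hasFDerivAt]
  have h1 : HasFDerivAt (fun y' : E => x - y') (-(ContinuousLinearMap.id ℝ E)) y :=
    (hasFDerivAt_id y).const_sub x
  have h2 := ((hg.differentiable one_ne_zero) (x - y)).hasFDerivAt
  have h3 := h2.comp y h1
  refine HasFDerivAt.congr_fderiv h3 ?_
  ext v
  rw [map_neg]
  simp only [ContinuousLinearMap.neg_apply, ContinuousLinearMap.coe_comp',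
    Function.comp_apply, ContinuousLinearMap.coe_id', id_eq, map_neg]
  rw [toDual_apply_apply, myDualGrad]

theorem myGradMul {f h : E → ℝ} {a b : E} {y : E}
    (hf : HasGradientAt f a y) (hh : HasGradientAt h b y) :
    HasGradientAt (fun z => f z * h z) (f y • b + h y • a) y := by
  rw [hasGradientAt_iff_hasFDerivAt] at *
  refine HasFDerivAt.congr_fderiv (hf.mul hh) ?_
  rw [map_add, LinearIsometryEquiv.map_smul, LinearIsometryEquiv.map_smul]

theorem myGradInvMul {w A : E → ℝ} {w' A' : E} {x : E}
    (hwd : HasGradientAt w w' x) (hAd : HasGradientAt A A' x) (h0 : w x ≠ 0) :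
    HasGradientAt (fun t => (w t)⁻¹ * A t)
      ((w x)⁻¹ • A' - ((w x ^ 2)⁻¹ * A x) • w') x := by
  rw [hasGradientAt_iff_hasFDerivAt] at *
  have hinv : HasFDerivAt (fun t => (w t)⁻¹)
      ((-(w x ^ 2)⁻¹) • (toDual ℝ E w')) x := by
    have h := (hasFDerivAt_inv h0).comp x hwd
    refine HasFDerivAt.congr_fderiv h ?_
    ext v
    simp only [ContinuousLinearMap.smul_apply, ContinuousLinearMap.coe_comp',
      Function.comp_apply, ContinuousLinearMap.smulRight_apply,
      ContinuousLinearMap.one_apply, smul_eq_mul]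
    simp only [ContinuousLinearMap.toSpanSingleton_apply, smul_eq_mul]
    ring
  have h := hinv.mul hAd
  refine HasFDerivAt.congr_fderiv h ?_
  rw [map_sub, LinearIsometryEquiv.map_smul, LinearIsometryEquiv.map_smul]
  module

theorem myGradIntegral (Ω : Set E) (hΩm : MeasurableSet Ω)
    {g c : E → ℝ} (hg : ContDiff ℝ 1 g) (hgc : HasCompactSupport g)
    (hc : Continuous c) (x : E) :
    HasGradientAt (fun x' => ∫ y in Ω, g (x' - y) * c y)
      (∫ y in Ω, c y • gradient g (x - y)) x := by
  classical
  set L := ContinuousLinearMap.mul ℝ ℝ with hL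
  set f := Ω.indicator c with hfdef
  have hf : LocallyIntegrable f volume := (hc.locallyIntegrable).indicator hΩm
  have key := hgc.hasFDerivAt_convolution_right L hf hg x
  have hfun : (f ⋆[L] g) = fun x' => ∫ y in Ω, g (x' - y) * c y := by
    funext x'
    rw [convolution_def, ← integral_indicator hΩm]
    congr 1
    funext y
    by_cases hy : y ∈ Ω <;>
      simp [f, indicator_of_mem, indicator_of_notMem, hy, mul_comm, L]
  rw [hfun] at key
  rw [hasGradientAt_iff_hasFDerivAt]
  refine HasFDerivAt.congr_fderiv key ?_
  have hgradcont : Continuous (gradient g) := myGradCont hg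
  have hint : Integrable (fun y => c y • gradient g (x - y)) (volume.restrict Ω) := by
    have h1 : Continuous fun y => c y • gradient g (x - y) :=
      hc.smul (hgradcont.comp (continuous_const.sub continuous_id))
    have h2 : HasCompactSupport fun y : E => gradient g (x - y) :=
      mySubSupp (myGradSupp hgc) x
    exact (h1.integrable_of_hasCompactSupport (h2.smul_left (f := c))).restrict
  ext v
  rw [toDual_apply_apply, real_inner_comm, ← integral_inner hint v]
  rw [convolution_precompR_apply L hf (hgc.fderiv ℝ) (hg.continuous_fderiv one_ne_zero),
    convolution_def, ← integral_indicator hΩm]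
  congr 1
  funext y
  by_cases hy : y ∈ Ω
  · simp only [indicator_of_mem hy, hfdef, L]
    rw [real_inner_smul_right, real_inner_comm, myDualGrad]
    simp [ContinuousLinearMap.mul_apply']
  · simp [f, hy]


end Aux
/-- The scaled kernel `R_δ(x,y) = α δ^{-n} R(|x-y|²/(4δ²))`. -/
noncomputable def scaledKernel (n : ℕ) (α δ : ℝ) (R : ℝ → ℝ)
    (x y : EuclideanSpace ℝ (Fin n)) : ℝ :=
  α / δ ^ n * R (‖x - y‖ ^ 2 / (4 * δ ^ 2))

/-- Identity for the gradient of the smoothing operator `S_δ` with boundary term. -/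
theorem stmt13 (n : ℕ) (Ω : Set (EuclideanSpace ℝ (Fin n)))
    (hΩm : MeasurableSet Ω) (hΩb : Bornology.IsBounded Ω)
    (R : ℝ → ℝ) (α δ : ℝ) (hα : 0 < α) (hδ : 0 < δ)
    (hRC1 : ContDiff ℝ 1 R) (hR : ∀ r, 0 ≤ R r) (hsupp : ∀ r, 1 < r → R r = 0)
    (σ : Measure (EuclideanSpace ℝ (Fin n))) [IsFiniteMeasure σ]
    (hσsupp : σ (frontier Ω)ᶜ = 0)
    (nvec : EuclideanSpace ℝ (Fin n) → EuclideanSpace ℝ (Fin n))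
    (hnvec : ∀ z ∈ frontier Ω, ‖nvec z‖ = 1)
    -- the divergence theorem for `Ω` with outward normal `nvec` and surface measure `σ`
    (hdiv : ∀ φ : EuclideanSpace ℝ (Fin n) → ℝ, ContDiff ℝ 1 φ →
      (∫ x in Ω, gradient φ x) = ∫ z, φ z • nvec z ∂σ)
    (u : EuclideanSpace ℝ (Fin n) → ℝ) (hu : ContDiff ℝ 1 u)
    -- positivity of the weight `w_δ` on `Ω`
    (hw : ∀ x ∈ Ω, 0 < ∫ y in Ω, scaledKernel n α δ R x y) :
    ∀ x ∈ Ω,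
      gradient u x -
        gradient (fun x' => (∫ y in Ω, scaledKernel n α δ R x' y)⁻¹ *
          ∫ y in Ω, scaledKernel n α δ R x' y * u y) x =
      (∫ y in Ω, scaledKernel n α δ R x y)⁻¹ •
          (∫ y in Ω, scaledKernel n α δ R x y • (gradient u x - gradient u y)) +
        ((∫ y in Ω, scaledKernel n α δ R x y) ^ 2)⁻¹ •
          ∫ z, (∫ y in Ω,
              scaledKernel n α δ R x y * scaledKernel n α δ R x z * (u z - u y)) •
            nvec z ∂σ := by
  intro x hx
  set g : EuclideanSpace ℝ (Fin n) → ℝ :=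
    fun v => α / δ ^ n * R (‖v‖ ^ 2 / (4 * δ ^ 2)) with hgdef
  have hker : scaledKernel n α δ R = fun a b => g (a - b) := rfl
  have hgC : ContDiff ℝ 1 g :=
    contDiff_const.mul (hRC1.comp ((contDiff_norm_sq ℝ).div_const _))
  have hgsupp : HasCompactSupport g := by
    refine HasCompactSupport.intro
      (isCompact_closedBall (0 : EuclideanSpace ℝ (Fin n)) (2 * δ)) fun v hv => ?_
    have hv' : 2 * δ < ‖v‖ := by
      simp only [Metric.mem_closedBall, dist_zero_right, not_le] at hv
      exact hv
    have h1 : 1 < ‖v‖ ^ 2 / (4 * δ ^ 2) := by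
      rw [lt_div_iff₀ (by positivity)]
      nlinarith [norm_nonneg v]
    simp only [hgdef]
    rw [hsupp _ h1, mul_zero]
  simp only [hker]
  -- continuity facts
  have hgcont := hgC.continuous
  have hgxcont : Continuous fun y => g (x - y) :=
    hgcont.comp (continuous_const.sub continuous_id)
  have hgxsupp : HasCompactSupport fun y => g (x - y) := mySubSupp hgsupp x
  have hucont := hu.continuous
  have hgradu := myGradCont hu
  have hgradg := myGradCont hgC
  have hgradgx : Continuous fun y => gradient g (x - y) :=
    hgradg.comp (continuous_const.sub continuous_id)
  have hgradgxsupp : HasCompactSupport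
      fun y : EuclideanSpace ℝ (Fin n) => gradient g (x - y) :=
    mySubSupp (myGradSupp hgsupp) x
  -- integrability facts
  have hIg : Integrable (fun y => g (x - y)) (volume.restrict Ω) :=
    (hgxcont.integrable_of_hasCompactSupport hgxsupp).restrict
  have hIgu : Integrable (fun y => g (x - y) * u y) (volume.restrict Ω) :=
    ((hgxcont.mul hucont).integrable_of_hasCompactSupport hgxsupp.mul_right).restrict
  have hI1 : Integrable (fun y => g (x - y) • gradient u y) (volume.restrict Ω) :=
    ((hgxcont.smul hgradu).integrable_of_hasCompactSupport hgxsupp.smul_right).restrict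
  have hI2 : Integrable (fun y => u y • gradient g (x - y)) (volume.restrict Ω) :=
    ((hucont.smul hgradgx).integrable_of_hasCompactSupport hgradgxsupp.smul_left).restrict
  have hI3 : Integrable (fun y => gradient g (x - y)) (volume.restrict Ω) :=
    (hgradgx.integrable_of_hasCompactSupport hgradgxsupp).restrict
  set W := ∫ y in Ω, g (x - y) with hWdef
  set A := ∫ y in Ω, g (x - y) * u y with hAdef
  set I₁ := ∫ y in Ω, g (x - y) • gradient u y with hI1def
  set I₂ := ∫ y in Ω, u y • gradient g (x - y) with hI2def
  set I₃ := ∫ y in Ω, gradient g (x - y) with hI3def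
  have hW0 : W ≠ 0 := ne_of_gt (hw x hx)
  -- LHS gradient
  have hWd : HasGradientAt (fun x' => ∫ y in Ω, g (x' - y)) I₃ x := by
    have h := myGradIntegral Ω hΩm hgC hgsupp (continuous_const (y := (1 : ℝ))) x
    simpa only [mul_one, one_smul] using h
  have hAd : HasGradientAt (fun x' => ∫ y in Ω, g (x' - y) * u y) I₂ x :=
    myGradIntegral Ω hΩm hgC hgsupp hucont x
  have hquot : HasGradientAt
      (fun x' => (∫ y in Ω, g (x' - y))⁻¹ * ∫ y in Ω, g (x' - y) * u y)
      (W⁻¹ • I₂ - ((W ^ 2)⁻¹ * A) • I₃) x := myGradInvMul hWd hAd hW0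
  rw [hquot.gradient]
  -- first RHS integral
  have h1 : (∫ y in Ω, g (x - y) • (gradient u x - gradient u y))
      = W • gradient u x - I₁ := by
    simp only [smul_sub]
    rw [integral_sub (hIg.smul_const _) hI1, integral_smul_const, ← hWdef]
  rw [h1]
  -- the boundary term
  set φ : EuclideanSpace ℝ (Fin n) → ℝ := fun z => g (x - z) * (W * u z - A) with hφdef
  have hφC : ContDiff ℝ 1 φ :=
    (hgC.comp (contDiff_const.sub contDiff_id)).mul
      ((contDiff_const.mul hu).sub contDiff_const)
  have hσeq : (∫ z, (∫ y in Ω, g (x - y) * g (x - z) * (u z - u y)) • nvec z ∂σ)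
      = ∫ z, φ z • nvec z ∂σ := by
    congr 1
    funext z
    congr 1
    have hrw : (fun y => g (x - y) * g (x - z) * (u z - u y))
        = fun y => (g (x - z) * u z) * g (x - y) - g (x - z) * (g (x - y) * u y) :=
      funext fun y => by ring
    rw [hrw, integral_sub (hIg.const_mul _) (hIgu.const_mul _),
      MeasureTheory.integral_const_mul (g (x - z) * u z) (fun a => g (x - a)),
      MeasureTheory.integral_const_mul (g (x - z)) (fun a => g (x - a) * u a),
      ← hWdef, ← hAdef]
    simp only [hφdef]
    ring
  have hgradφ : ∀ y, gradient φ y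
      = W • (g (x - y) • gradient u y) - W • (u y • gradient g (x - y))
        + A • gradient g (x - y) := by
    intro y
    have hf2 : HasGradientAt (fun y' => W * u y' - A) (W • gradient u y) y := by
      rw [hasGradientAt_iff_hasFDerivAt]
      have h := (((hu.differentiable one_ne_zero) y).hasFDerivAt.const_mul W).sub_const A
      refine HasFDerivAt.congr_fderiv h ?_
      rw [LinearIsometryEquiv.map_smul, myDualGrad']
    have hprod := myGradMul (myGradCompSub hgC x y) hf2
    rw [hφdef, hprod.gradient]
    module
  have hI1s : Integrable (fun y => W • (g (x - y) • gradient u y)) (volume.restrict Ω) :=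
    hI1.smul W
  have hI2s : Integrable (fun y => W • (u y • gradient g (x - y))) (volume.restrict Ω) :=
    hI2.smul W
  have hI3s : Integrable (fun y => A • gradient g (x - y)) (volume.restrict Ω) :=
    hI3.smul A
  have hI12s : Integrable
      (fun y => W • (g (x - y) • gradient u y) - W • (u y • gradient g (x - y)))
      (volume.restrict Ω) := hI1s.sub hI2s
  have hLeb : (∫ y in Ω, gradient φ y) = W • I₁ - W • I₂ + A • I₃ := by
    simp only [hgradφ]
    rw [integral_add hI12s hI3s,
      integral_sub hI1s hI2s, integral_smul, integral_smul, integral_smul,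
      ← hI1def, ← hI2def, ← hI3def]
  rw [hσeq, ← hdiv φ hφC, hLeb]
  match_scalars <;> field_simp <;> ring
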